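/- Let A be a ℤ₃-graded associative unital ℂ-algebra, let q ∈ ℂ be a primitive cube root of unity (q³ = 1, q ≠ 1), and let • be the twisted product on A ⊗_ℂ A determined by (a⊗c) • (b⊗d) = q^{|b||c|} (ab) ⊗ (cd) for homogeneous b, c. For y ∈ A write Δ̄(y) := y⊗1 + 1⊗y. Then for all y₁, y₂, y₃ of degree 1 in A: Σ_{σ∈S₃} Δ̄(y_{σ(1)}) • Δ̄(y_{σ(2)}) • Δ̄(y_{σ(3)}) = {y₁,y₂,y₃} ⊗ 1 + 1 ⊗ {y₁,y₂,y₃}, where {y₁,y₂,y₃} := Σ_{σ∈S₃} y_{σ(1)} y_{σ(2)} y_{σ(3)} is computed in A. (This is the compatibility of the coproduct with the ternary bracket: the symmetrized product of primitive elements is primitive.) -/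

import Mathlib

open TensorProduct

/-- The defining property of the twisted multiplication on `A ⊗ A`:
`(a⊗c) • (b⊗d) = q^{|b||c|} (ab) ⊗ (cd)` for homogeneous `b, c`. -/
def IsTwistedMul {A : Type*} [Ring A] [Algebra ℂ A]
    (𝒜 : ZMod 3 → Submodule ℂ A) (q : ℂ)
    (m : (A ⊗[ℂ] A) →ₗ[ℂ] (A ⊗[ℂ] A) →ₗ[ℂ] (A ⊗[ℂ] A)) : Prop :=
  ∀ (a b c d : A) (j k : ZMod 3), b ∈ 𝒜 j → c ∈ 𝒜 k →
    m (a ⊗ₜ[ℂ] c) (b ⊗ₜ[ℂ] d) = q ^ (j.val * k.val) • ((a * b) ⊗ₜ[ℂ] (c * d))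

lemma key {A : Type*} [Ring A] [Algebra ℂ A]
    (𝒜 : ZMod 3 → Submodule ℂ A) [GradedAlgebra 𝒜] (q : ℂ)
    (m : (A ⊗[ℂ] A) →ₗ[ℂ] (A ⊗[ℂ] A) →ₗ[ℂ] (A ⊗[ℂ] A))
    (hm : IsTwistedMul 𝒜 q m) (a b c : A)
    (ha : a ∈ 𝒜 1) (hb : b ∈ 𝒜 1) (hc : c ∈ 𝒜 1) :
    m (m (a ⊗ₜ[ℂ] 1 + 1 ⊗ₜ[ℂ] a) (b ⊗ₜ[ℂ] 1 + 1 ⊗ₜ[ℂ] b)) (c ⊗ₜ[ℂ] 1 + 1 ⊗ₜ[ℂ] c)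
    = (a*b*c) ⊗ₜ[ℂ] 1 + 1 ⊗ₜ[ℂ] (a*b*c) + (a*b) ⊗ₜ[ℂ] c + a ⊗ₜ[ℂ] (b*c)
      + q • ((a*c) ⊗ₜ[ℂ] b) + q • (b ⊗ₜ[ℂ] (a*c))
      + q^2 • ((b*c) ⊗ₜ[ℂ] a) + q^2 • (c ⊗ₜ[ℂ] (a*b)) := by
  have h1 : (1:A) ∈ 𝒜 0 := SetLike.one_mem_graded 𝒜
  have hab : a * b ∈ 𝒜 2 := by simpa [one_add_one_eq_two] using SetLike.mul_mem_graded ha hb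
  have step1 : m (a ⊗ₜ[ℂ] 1 + 1 ⊗ₜ[ℂ] a) (b ⊗ₜ[ℂ] 1 + 1 ⊗ₜ[ℂ] b)
      = (a*b) ⊗ₜ[ℂ] 1 + a ⊗ₜ[ℂ] b + q • (b ⊗ₜ[ℂ] a) + 1 ⊗ₜ[ℂ] (a*b) := by
    simp only [map_add, LinearMap.add_apply,
      hm a b 1 1 1 0 hb h1, hm a 1 1 b 0 0 h1 h1,
      hm 1 b a 1 1 1 hb ha, hm 1 1 a b 0 1 h1 ha]
    norm_num [ZMod.val_one]
    abel
  rw [step1]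
  simp only [map_add, map_smul, LinearMap.add_apply, LinearMap.smul_apply,
    hm (a*b) c 1 1 1 0 hc h1, hm (a*b) 1 1 c 0 0 h1 h1,
    hm a c b 1 1 1 hc hb, hm a 1 b c 0 1 h1 hb,
    hm b c a 1 1 1 hc ha, hm b 1 a c 0 1 h1 ha,
    hm 1 c (a*b) 1 1 2 hc hab, hm 1 1 (a*b) c 0 2 h1 hab]
  norm_num [ZMod.val_one, smul_smul]
  rw [show ((2:ZMod 3)).val = 2 from rfl]
  ring_nf
  abel

/-- Compatibility of the coproduct with the ternary bracket: for degree-one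
elements `y₁, y₂, y₃` of a `ℤ₃`-graded algebra and `Δ̄(y) = y⊗1 + 1⊗y`,
the symmetrized twisted product of the `Δ̄(y_i)` equals
`{y₁,y₂,y₃} ⊗ 1 + 1 ⊗ {y₁,y₂,y₃}`. -/
theorem coproduct_symmetrized_product_primitive
    {A : Type*} [Ring A] [Algebra ℂ A]
    (𝒜 : ZMod 3 → Submodule ℂ A) [GradedAlgebra 𝒜]
    (q : ℂ) (hq3 : q ^ 3 = 1) (hq1 : q ≠ 1)
    (m : (A ⊗[ℂ] A) →ₗ[ℂ] (A ⊗[ℂ] A) →ₗ[ℂ] (A ⊗[ℂ] A))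
    (hm : IsTwistedMul 𝒜 q m)
    (y : Fin 3 → A) (hy : ∀ i, y i ∈ 𝒜 1)
    (Δ' : A → A ⊗[ℂ] A) (hΔ' : ∀ a : A, Δ' a = a ⊗ₜ[ℂ] 1 + 1 ⊗ₜ[ℂ] a)
    (T : A) (hT : T = ∑ σ : Equiv.Perm (Fin 3), y (σ 0) * y (σ 1) * y (σ 2)) :
    ∑ σ : Equiv.Perm (Fin 3), m (m (Δ' (y (σ 0))) (Δ' (y (σ 1)))) (Δ' (y (σ 2)))
      = T ⊗ₜ[ℂ] 1 + 1 ⊗ₜ[ℂ] T := by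
  have hq2 : q ^ 2 = -1 - q := by
    have h : (q - 1) * (q ^ 2 + q + 1) = 0 := by linear_combination hq3
    rcases mul_eq_zero.mp h with h' | h'
    · exact absurd (sub_eq_zero.mp h') hq1
    · linear_combination h'
  have huniv : (Finset.univ : Finset (Equiv.Perm (Fin 3))) =
      {1, Equiv.swap 0 1, Equiv.swap 0 2, Equiv.swap 1 2,
       Equiv.swap 0 1 * Equiv.swap 1 2, Equiv.swap 1 2 * Equiv.swap 0 1} := by decide
  rw [hT, huniv]
  rw [Finset.sum_insert (by decide), Finset.sum_insert (by decide),
    Finset.sum_insert (by decide), Finset.sum_insert (by decide),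
    Finset.sum_insert (by decide), Finset.sum_singleton,
    Finset.sum_insert (by decide), Finset.sum_insert (by decide),
    Finset.sum_insert (by decide), Finset.sum_insert (by decide),
    Finset.sum_insert (by decide), Finset.sum_singleton]
  simp only [show ∀ i : Fin 3, (1 : Equiv.Perm (Fin 3)) i = i from fun _ => rfl,
    show ((Equiv.swap 0 1 : Equiv.Perm (Fin 3)) 0) = 1 from by decide,
    show ((Equiv.swap 0 1 : Equiv.Perm (Fin 3)) 1) = 0 from by decide,
    show ((Equiv.swap 0 1 : Equiv.Perm (Fin 3)) 2) = 2 from by decide,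
    show ((Equiv.swap 0 2 : Equiv.Perm (Fin 3)) 0) = 2 from by decide,
    show ((Equiv.swap 0 2 : Equiv.Perm (Fin 3)) 1) = 1 from by decide,
    show ((Equiv.swap 0 2 : Equiv.Perm (Fin 3)) 2) = 0 from by decide,
    show ((Equiv.swap 1 2 : Equiv.Perm (Fin 3)) 0) = 0 from by decide,
    show ((Equiv.swap 1 2 : Equiv.Perm (Fin 3)) 1) = 2 from by decide,
    show ((Equiv.swap 1 2 : Equiv.Perm (Fin 3)) 2) = 1 from by decide,
    show ((Equiv.swap 0 1 * Equiv.swap 1 2 : Equiv.Perm (Fin 3)) 0) = 1 from by decide,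
    show ((Equiv.swap 0 1 * Equiv.swap 1 2 : Equiv.Perm (Fin 3)) 1) = 2 from by decide,
    show ((Equiv.swap 0 1 * Equiv.swap 1 2 : Equiv.Perm (Fin 3)) 2) = 0 from by decide,
    show ((Equiv.swap 1 2 * Equiv.swap 0 1 : Equiv.Perm (Fin 3)) 0) = 2 from by decide,
    show ((Equiv.swap 1 2 * Equiv.swap 0 1 : Equiv.Perm (Fin 3)) 1) = 0 from by decide,
    show ((Equiv.swap 1 2 * Equiv.swap 0 1 : Equiv.Perm (Fin 3)) 2) = 1 from by decide,
    hΔ']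
  rw [key 𝒜 q m hm (y 0) (y 1) (y 2) (hy 0) (hy 1) (hy 2),
    key 𝒜 q m hm (y 1) (y 0) (y 2) (hy 1) (hy 0) (hy 2),
    key 𝒜 q m hm (y 2) (y 1) (y 0) (hy 2) (hy 1) (hy 0),
    key 𝒜 q m hm (y 0) (y 2) (y 1) (hy 0) (hy 2) (hy 1),
    key 𝒜 q m hm (y 1) (y 2) (y 0) (hy 1) (hy 2) (hy 0),
    key 𝒜 q m hm (y 2) (y 0) (y 1) (hy 2) (hy 0) (hy 1)]
  rw [hq2]
  simp only [add_tmul, tmul_add]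
  module
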